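/- Let G be a graph and let the weights satisfy 0 ≤ w_e ≤ 2·w_v. Then every mixed dominating set D of G satisfies w(D) ≥ (w_e/2)·τ(G), where τ(G) is the minimum size of a vertex cover of G. -/

import Mathlib

/-- Mixed dominating set, see paper. -/
def IsMixedDomSet {V : Type*} (G : SimpleGraph V) (VD : Finset V) (ED : Finset (Sym2 V)) :
    Prop :=
  (∀ e ∈ ED, e ∈ G.edgeSet) ∧
  (∀ v : V, v ∉ VD → (∃ e ∈ ED, v ∈ e) ∨ ∃ u ∈ VD, G.Adj v u) ∧
  (∀ e ∈ G.edgeSet, e ∉ ED → ∃ v ∈ e, v ∈ VD ∨ ∃ f ∈ ED, v ∈ f)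

/-- A vertex cover contains at least one endpoint of every edge. -/
def IsVertexCover {V : Type*} (G : SimpleGraph V) (C : Finset V) : Prop :=
  ∀ ⦃u w : V⦄, G.Adj u w → u ∈ C ∨ w ∈ C

/-- Let `0 ≤ w_e ≤ 2 w_v`. Then every mixed dominating set `D = (VD, ED)` of `G` satisfies
`w(D) ≥ (w_e / 2) * τ(G)`. -/
theorem weight_mixedDomSet_ge_half_we_tau {V : Type*} (G : SimpleGraph V)
    (wv we : ℝ) (hwe : 0 ≤ we) (hwe2 : we ≤ 2 * wv)
    (VD : Finset V) (ED : Finset (Sym2 V)) (hD : IsMixedDomSet G VD ED)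
    (τ : ℕ) (hτ : ∃ C : Finset V, IsVertexCover G C ∧ C.card = τ)
    (hτmin : ∀ C : Finset V, IsVertexCover G C → τ ≤ C.card) :
    we / 2 * τ ≤ wv * VD.card + we * ED.card := by
  classical
  obtain ⟨hED, _, hcov⟩ := hD
  set C : Finset V := VD ∪ ED.biUnion (fun e => {e.out.1, e.out.2}) with hC
  have memC : ∀ v : V, ∀ e ∈ ED, v ∈ e → v ∈ C := by
    intro v e he hv
    have : v = e.out.1 ∨ v = e.out.2 := by
      have h2 : e = s(e.out.1, e.out.2) := by
        exact (e.out_eq).symm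
      rw [h2] at hv
      exact Sym2.mem_iff.mp hv
    refine Finset.mem_union_right _ (Finset.mem_biUnion.mpr ⟨e, he, ?_⟩)
    rcases this with h | h <;> simp [h]
  have hvc : IsVertexCover G C := by
    intro u w huw
    by_cases hmem : s(u, w) ∈ ED
    · exact Or.inl (memC u _ hmem (Sym2.mem_mk_left u w))
    · obtain ⟨v, hv, hv2⟩ := hcov s(u, w) huw hmem
      rcases Sym2.mem_iff.mp hv with rfl | rfl
      · left
        rcases hv2 with h | ⟨f, hf, hvf⟩
        · exact Finset.mem_union_left _ h
        · exact memC v f hf hvf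
      · right
        rcases hv2 with h | ⟨f, hf, hvf⟩
        · exact Finset.mem_union_left _ h
        · exact memC v f hf hvf
  have hcard : C.card ≤ VD.card + 2 * ED.card := by
    calc C.card ≤ VD.card + (ED.biUnion (fun e => {e.out.1, e.out.2})).card :=
          Finset.card_union_le _ _
      _ ≤ VD.card + ∑ e ∈ ED, ({e.out.1, e.out.2} : Finset V).card := by
          gcongr; exact Finset.card_biUnion_le
      _ ≤ VD.card + ∑ _e ∈ ED, 2 := by
          gcongr with e he
          exact Finset.card_insert_le _ _ |>.trans (by simp)
      _ = VD.card + 2 * ED.card := by rw [Finset.sum_const, smul_eq_mul, mul_comm]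
  have hτle : (τ : ℝ) ≤ VD.card + 2 * ED.card := by
    have := hτmin C hvc
    exact_mod_cast this.trans hcard
  have hwv : we / 2 ≤ wv := by linarith
  calc we / 2 * τ ≤ we / 2 * (VD.card + 2 * ED.card) := by
        apply mul_le_mul_of_nonneg_left hτle (by linarith)
    _ = we / 2 * VD.card + we * ED.card := by ring
    _ ≤ wv * VD.card + we * ED.card := by gcongr
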